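/- Let p be a prime, R = ℤ[x] the polynomial ring, and S = R[y]/(1 − (1 − y)^p). Then S is a free R-module with basis 1, y, y², …, y^{p−1}, and the determinant of the R-linear endomorphism of S given by multiplication by the element x + y − x·y equals 1 − (1 − x)^p. -/

import Mathlib

open Polynomial

open Fin.NatCast in
lemma perm_claim {m : ℕ} (σ : Equiv.Perm (Fin (m + 2)))
    (h : ∀ i, σ i = i ∨ σ i = i + 1) : σ = 1 ∨ σ = finRotate (m + 2) := by
  by_cases hid : ∀ i, σ i = i
  · exact Or.inl (Equiv.ext hid)
  · push_neg at hid
    obtain ⟨k, hk⟩ := hid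
    have hone : (1 : Fin (m + 2)) ≠ 0 := by
      simp [Fin.ext_iff]
    have step : ∀ i : Fin (m + 2), σ i = i + 1 → σ (i + 1) = i + 1 + 1 := by
      intro i hi
      rcases h (i + 1) with h' | h'
      · exfalso
        have := σ.injective (hi.trans h'.symm)
        have : (1 : Fin (m + 2)) = 0 := by
          have := congrArg (fun z => z - i) this
          simpa [add_sub_cancel_left] using this
        exact hone this
      · exact h'
    have all : ∀ j : ℕ, σ (k + (j : Fin (m + 2))) = k + (j : Fin (m + 2)) + 1 := by
      intro j
      induction j with
      | zero => simpa using (h k).resolve_left hk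
      | succ j ih =>
          have : ((j + 1 : ℕ) : Fin (m + 2)) = (j : Fin (m + 2)) + 1 := by push_cast; ring
          rw [this, ← add_assoc]
          exact step _ ih
    right
    refine Equiv.ext fun i => ?_
    have := all ((i - k : Fin (m + 2)) : ℕ)
    rw [Fin.cast_val_eq_self, add_sub_cancel] at this
    rw [finRotate_succ_apply]
    exact this

lemma det_key {R : Type*} [CommRing R] (m : ℕ) (c : R) :
    Matrix.det (Matrix.of fun i j : Fin (m + 2) =>
      (if i = j then (1 : R) else 0) - c * (if i = j + 1 then 1 else 0)) =
      1 - c ^ (m + 2) := by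
  classical
  set M : Matrix (Fin (m + 2)) (Fin (m + 2)) R := Matrix.of fun i j =>
    (if i = j then (1 : R) else 0) - c * (if i = j + 1 then 1 else 0) with hM
  have hself : ∀ i : Fin (m + 2), i ≠ i + 1 := by
    intro i hi
    have : (0 : Fin (m + 2)) = 1 := by
      have := congrArg (fun z => z - i) hi
      simpa [add_sub_cancel_left] using this
    simp [Fin.ext_iff] at this
  have hne : (1 : Equiv.Perm (Fin (m + 2))) ≠ finRotate (m + 2) := by
    intro hcon
    have := DFunLike.congr_fun hcon (0 : Fin (m + 2))
    simp only [Equiv.Perm.coe_one, id_eq, finRotate_succ_apply, zero_add] at this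
    exact (hself 0) (by simpa using this)
  rw [Matrix.det_apply]
  rw [← Finset.sum_subset (Finset.subset_univ ({1, finRotate (m + 2)} : Finset (Equiv.Perm (Fin (m + 2)))))]
  · rw [Finset.sum_pair hne]
    have h1 : (Equiv.Perm.sign (1 : Equiv.Perm (Fin (m + 2)))) •
        (∏ i, M ((1 : Equiv.Perm (Fin (m+2))) i) i) = 1 := by
      simp [hM, fun i => hself i]
    have h2 : (Equiv.Perm.sign (finRotate (m + 2))) •
        (∏ i, M (finRotate (m + 2) i) i) = -c ^ (m + 2) := by
      have hprod : (∏ i : Fin (m + 2), M (finRotate (m + 2) i) i) = (-c) ^ (m + 2) := by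
        rw [Finset.prod_congr rfl (fun i _ => ?_), Finset.prod_const, Finset.card_univ,
          Fintype.card_fin]
        simp [hM, finRotate_succ_apply, (hself i).symm, fun i => hself i]
      rw [hprod, sign_finRotate, neg_pow c]
      simp only [Units.smul_def, Units.val_pow_eq_pow_val, Units.val_neg, Units.val_one,
        zsmul_eq_mul, Int.cast_pow, Int.cast_neg, Int.cast_one]
      rw [← mul_assoc, ← pow_add,
        Odd.neg_one_pow (⟨m + 1, by omega⟩ : Odd (m + 2 - 1 + (m + 2)))]
      ring
    rw [h1, h2]
    ring
  · intro σ _ hσ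
    simp only [Finset.mem_insert, Finset.mem_singleton] at hσ
    push_neg at hσ
    have : ∃ i, M (σ i) i = 0 := by
      by_contra hcon
      push_neg at hcon
      have hchoice : ∀ i, σ i = i ∨ σ i = i + 1 := by
        intro i
        by_contra hc
        push_neg at hc
        apply hcon i
        simp [hM, hc.1, hc.2]
      rcases perm_claim σ hchoice with h | h
      · exact hσ.1 h
      · exact hσ.2 h
    obtain ⟨i, hi⟩ := this
    rw [Finset.prod_eq_zero (f := fun k => M (σ k) k) (Finset.mem_univ i) hi, smul_zero]

section Main

variable {A : Type*} [CommRing A] [Nontrivial A]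

omit [Nontrivial A] in
lemma eps_sq (p : ℕ) : ((-1 : A[X]) ^ (p + 1)) * ((-1 : A[X]) ^ (p + 1)) = 1 := by
  rw [← pow_add]
  exact Even.neg_one_pow ⟨p + 1, by ring⟩

omit [Nontrivial A] in
lemma f'_eq (p : ℕ) :
    ((-1 : A[X]) ^ (p + 1)) * (1 - (1 - X : A[X]) ^ p) =
      ((X : A[X]) - C 1) ^ p + (-1) ^ (p + 1) := by
  rw [show ((1 : A[X]) - X) = -(X - C 1) by rw [map_one]; ring, neg_pow ((X : A[X]) - C 1) p,
    mul_sub, mul_one, ← mul_assoc, ← pow_add,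
    Odd.neg_one_pow (⟨p, by ring⟩ : Odd (p + 1 + p))]
  ring

lemma f'_monic (p : ℕ) (hp : 0 < p) :
    (((-1 : A[X]) ^ (p + 1)) * (1 - (1 - X : A[X]) ^ p)).Monic := by
  rw [f'_eq]
  refine Monic.add_of_left ((monic_X_sub_C (1 : A)).pow p) ?_
  have h1 : ((-1 : A[X]) ^ (p + 1)) = C ((-1 : A) ^ (p + 1)) := by simp
  rw [h1]
  refine degree_C_le.trans_lt ?_
  rw [degree_eq_natDegree ((monic_X_sub_C (1 : A)).pow p).ne_zero,
    Monic.natDegree_pow (monic_X_sub_C (1 : A)), natDegree_X_sub_C, mul_one]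
  exact_mod_cast hp

lemma f'_natDegree (p : ℕ) (hp : 0 < p) :
    (((-1 : A[X]) ^ (p + 1)) * (1 - (1 - X : A[X]) ^ p)).natDegree = p := by
  rw [f'_eq]
  have h1 : ((-1 : A[X]) ^ (p + 1)) = C ((-1 : A) ^ (p + 1)) := by simp
  rw [h1, natDegree_add_C, Monic.natDegree_pow (monic_X_sub_C (1 : A)), natDegree_X_sub_C, mul_one]

end Main

section Equivs

/-- Compatibility shim for the removed `AdjoinRoot.liftHom`. -/
noncomputable def AdjoinRoot.liftHom {R S : Type*} [CommRing R] [CommRing S] [Algebra R S]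
    (f : R[X]) (x : S) (hfx : aeval x f = 0) : AdjoinRoot f →ₐ[R] S :=
  AdjoinRoot.liftAlgHom f (Algebra.ofId R S) x hfx

@[simp]
theorem AdjoinRoot.liftHom_root {R S : Type*} [CommRing R] [CommRing S] [Algebra R S]
    {f : R[X]} {x : S} {hfx : aeval x f = 0} : AdjoinRoot.liftHom f x hfx (AdjoinRoot.root f) = x :=
  AdjoinRoot.liftAlgHom_root _ _ _ _

variable {A : Type*} [CommRing A] [Nontrivial A]

lemma exists_e2 (p : ℕ) :
    ∃ e : AdjoinRoot (1 - (1 - X : A[X]) ^ p) ≃ₐ[A]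
        AdjoinRoot (((-1 : A[X]) ^ (p + 1)) * (1 - (1 - X : A[X]) ^ p)),
      e.symm (AdjoinRoot.root _) = AdjoinRoot.root (1 - (1 - X : A[X]) ^ p) := by
  have hd1 : (((-1 : A[X]) ^ (p + 1)) * (1 - (1 - X : A[X]) ^ p)) ∣ (1 - (1 - X : A[X]) ^ p) :=
    ⟨(-1 : A[X]) ^ (p + 1), by
      rw [mul_assoc, mul_comm (1 - (1 - X : A[X]) ^ p), ← mul_assoc, eps_sq, one_mul]⟩
  have hd2 : (1 - (1 - X : A[X]) ^ p) ∣ (((-1 : A[X]) ^ (p + 1)) * (1 - (1 - X : A[X]) ^ p)) :=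
    ⟨(-1 : A[X]) ^ (p + 1), mul_comm _ _⟩
  refine ⟨AlgEquiv.ofAlgHom
    (AdjoinRoot.liftHom _ (AdjoinRoot.root _)
      (by rw [AdjoinRoot.aeval_eq, AdjoinRoot.mk_eq_zero]; exact hd1))
    (AdjoinRoot.liftHom _ (AdjoinRoot.root _)
      (by rw [AdjoinRoot.aeval_eq, AdjoinRoot.mk_eq_zero]; exact hd2))
    (AdjoinRoot.algHom_ext (by
      rw [AlgHom.comp_apply, AdjoinRoot.liftHom_root, AdjoinRoot.liftHom_root, AlgHom.id_apply]))
    (AdjoinRoot.algHom_ext (by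
      rw [AlgHom.comp_apply, AdjoinRoot.liftHom_root, AdjoinRoot.liftHom_root, AlgHom.id_apply])),
    ?_⟩
  rw [AlgEquiv.ofAlgHom_symm_apply, AdjoinRoot.liftHom_root]

omit [Nontrivial A] in
lemma root_g_pow (p : ℕ) :
    AdjoinRoot.root ((X : A[X]) ^ p - C 1) ^ p = 1 := by
  have h : (aeval (AdjoinRoot.root ((X : A[X]) ^ p - C 1))) ((X : A[X]) ^ p - C 1) = 0 := by
    rw [AdjoinRoot.aeval_eq, AdjoinRoot.mk_self]
  simp only [map_sub, map_pow, aeval_X, aeval_C] at h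
  have := sub_eq_zero.mp h
  simpa using this

omit [Nontrivial A] in
lemma exists_e3 (p : ℕ) :
    ∃ e : AdjoinRoot (1 - (1 - X : A[X]) ^ p) ≃ₐ[A] AdjoinRoot ((X : A[X]) ^ p - C 1),
      e (AdjoinRoot.root _) = 1 - AdjoinRoot.root ((X : A[X]) ^ p - C 1) := by
  have hf0 : (1 - AdjoinRoot.root (1 - (1 - X : A[X]) ^ p)) ^ p = 1 := by
    have h : (aeval (AdjoinRoot.root (1 - (1 - X : A[X]) ^ p))) (1 - (1 - X : A[X]) ^ p) = 0 := by
      rw [AdjoinRoot.aeval_eq, AdjoinRoot.mk_self]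
    simp only [map_sub, map_pow, aeval_X, map_one] at h
    have := sub_eq_zero.mp h
    exact this.symm
  have h1 : (aeval ((1 : AdjoinRoot ((X : A[X]) ^ p - C 1)) - AdjoinRoot.root _))
      (1 - (1 - X : A[X]) ^ p) = 0 := by
    simp only [map_sub, map_pow, aeval_X, map_one, sub_sub_cancel]
    rw [root_g_pow, sub_self]
  have h2 : (aeval ((1 : AdjoinRoot (1 - (1 - X : A[X]) ^ p)) - AdjoinRoot.root _))
      ((X : A[X]) ^ p - C 1) = 0 := by
    simp only [map_sub, map_pow, aeval_X, aeval_C, map_one]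
    rw [hf0, sub_self]
  refine ⟨AlgEquiv.ofAlgHom
    (AdjoinRoot.liftHom _ _ h1) (AdjoinRoot.liftHom _ _ h2)
    (AdjoinRoot.algHom_ext (by
      simp [map_sub, AdjoinRoot.liftHom_root, sub_sub_cancel]))
    (AdjoinRoot.algHom_ext (by
      simp [map_sub, AdjoinRoot.liftHom_root, sub_sub_cancel])), ?_⟩
  rw [AlgEquiv.ofAlgHom_apply, AdjoinRoot.liftHom_root]

end Equivs

section Assemble

variable {A : Type*} [CommRing A] [Nontrivial A]

lemma exists_basis (p : ℕ) (hp : 0 < p) :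
    ∃ b : Module.Basis (Fin p) A (AdjoinRoot (1 - (1 - X : A[X]) ^ p)),
      ∀ i : Fin p, b i = AdjoinRoot.root (1 - (1 - X : A[X]) ^ p) ^ (i : ℕ) := by
  obtain ⟨e, he⟩ := exists_e2 (A := A) p
  let pb := AdjoinRoot.powerBasis' (f'_monic (A := A) p hp)
  have hdim : pb.dim = p := f'_natDegree p hp
  refine ⟨(pb.basis.reindex (finCongr hdim)).map e.symm.toLinearEquiv, fun i => ?_⟩
  rw [Module.Basis.map_apply, Module.Basis.reindex_apply, pb.coe_basis]
  have hgen : pb.gen = AdjoinRoot.root _ := AdjoinRoot.powerBasis'_gen _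
  rw [hgen]
  have : e.symm.toLinearEquiv (AdjoinRoot.root _ ^ (((finCongr hdim).symm i : Fin pb.dim) : ℕ)) =
      e.symm (AdjoinRoot.root _ ^ (((finCongr hdim).symm i : Fin pb.dim) : ℕ)) := rfl
  rw [this, map_pow, he]
  congr 1

lemma det_part (p : ℕ) (hp2 : 2 ≤ p) (x : A) :
    LinearMap.det (LinearMap.mulLeft A
      (algebraMap A (AdjoinRoot (1 - (1 - X : A[X]) ^ p)) x +
        AdjoinRoot.root (1 - (1 - X : A[X]) ^ p) -
        algebraMap A (AdjoinRoot (1 - (1 - X : A[X]) ^ p)) x *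
          AdjoinRoot.root (1 - (1 - X : A[X]) ^ p))) = 1 - (1 - x) ^ p := by
  obtain ⟨m, rfl⟩ : ∃ m, p = m + 2 := ⟨p - 2, by omega⟩
  obtain ⟨e, he⟩ := exists_e3 (A := A) (m + 2)
  set a : AdjoinRoot (1 - (1 - X : A[X]) ^ (m + 2)) :=
    algebraMap A (AdjoinRoot (1 - (1 - X : A[X]) ^ (m + 2))) x +
      AdjoinRoot.root (1 - (1 - X : A[X]) ^ (m + 2)) -
      algebraMap A (AdjoinRoot (1 - (1 - X : A[X]) ^ (m + 2))) x *
        AdjoinRoot.root (1 - (1 - X : A[X]) ^ (m + 2)) with hadef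
  have hconj : LinearMap.mulLeft A (e a) =
      (e.toLinearEquiv : AdjoinRoot (1 - (1 - X : A[X]) ^ (m + 2)) →ₗ[A]
          AdjoinRoot ((X : A[X]) ^ (m + 2) - C 1)) ∘ₗ LinearMap.mulLeft A a ∘ₗ
        (e.toLinearEquiv.symm : AdjoinRoot ((X : A[X]) ^ (m + 2) - C 1) →ₗ[A]
          AdjoinRoot (1 - (1 - X : A[X]) ^ (m + 2))) := by
    refine LinearMap.ext fun z => ?_
    simp only [LinearMap.mulLeft_apply, LinearMap.coe_comp, Function.comp_apply,
      LinearEquiv.coe_coe]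
    show e a * z = e (a * e.toLinearEquiv.symm z)
    rw [map_mul]
    congr 1
    exact (e.apply_symm_apply z).symm
  have hdet1 : LinearMap.det (LinearMap.mulLeft A a) =
      LinearMap.det (LinearMap.mulLeft A (e a)) := by
    rw [hconj, LinearMap.det_conj]
  have hea : e a = 1 - algebraMap A (AdjoinRoot ((X : A[X]) ^ (m + 2) - C 1)) (1 - x) *
      AdjoinRoot.root ((X : A[X]) ^ (m + 2) - C 1) := by
    rw [hadef]
    simp only [map_sub, map_add, map_mul, AlgEquiv.commutes, he, map_one]
    ring
  have hg : ((X : A[X]) ^ (m + 2) - C 1).Monic := monic_X_pow_sub_C (1 : A) (by omega)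
  let pb := AdjoinRoot.powerBasis' hg
  have hdim : pb.dim = m + 2 := by
    show ((X : A[X]) ^ (m + 2) - C 1).natDegree = m + 2
    rw [natDegree_X_pow_sub_C]
  let b := pb.basis.reindex (finCongr hdim)
  have hb : ∀ i : Fin (m + 2), b i =
      AdjoinRoot.root ((X : A[X]) ^ (m + 2) - C 1) ^ (i : ℕ) := by
    intro i
    rw [show b i = pb.basis ((finCongr hdim).symm i) from Module.Basis.reindex_apply _ _ i,
      pb.coe_basis, AdjoinRoot.powerBasis'_gen]
    congr 1
  have hrpow : ∀ j : Fin (m + 2),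
      AdjoinRoot.root ((X : A[X]) ^ (m + 2) - C 1) ^ ((j : ℕ) + 1) =
        AdjoinRoot.root ((X : A[X]) ^ (m + 2) - C 1) ^ ((j + 1 : Fin (m + 2)) : ℕ) := by
    intro j
    have hr : AdjoinRoot.root ((X : A[X]) ^ (m + 2) - C 1) ^ (m + 2) = 1 := root_g_pow (m + 2)
    have hval : ((j + 1 : Fin (m + 2)) : ℕ) = ((j : ℕ) + 1) % (m + 2) := by
      rw [Fin.val_add, Fin.val_one]
    rw [hval]
    conv_lhs => rw [← Nat.div_add_mod ((j : ℕ) + 1) (m + 2)]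
    rw [pow_add (AdjoinRoot.root ((X : A[X]) ^ (m + 2) - C 1))
        ((m + 2) * (((j : ℕ) + 1) / (m + 2))) (((j : ℕ) + 1) % (m + 2)),
      pow_mul (AdjoinRoot.root ((X : A[X]) ^ (m + 2) - C 1)) (m + 2)
        (((j : ℕ) + 1) / (m + 2)), hr, one_pow, one_mul]
  set c : A := 1 - x with hc
  set M : Matrix (Fin (m + 2)) (Fin (m + 2)) A := Matrix.of fun i j =>
    (if i = j then 1 else 0) - c * (if i = j + 1 then 1 else 0) with hMdef
  have hlin : LinearMap.mulLeft A (e a) = Matrix.toLin b b M := by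
    refine b.ext fun j => ?_
    rw [Matrix.toLin_self, LinearMap.mulLeft_apply, hea, hb]
    have hsum : (∑ i, M i j • b i) =
        AdjoinRoot.root ((X : A[X]) ^ (m + 2) - C 1) ^ (j : ℕ) -
          c • AdjoinRoot.root ((X : A[X]) ^ (m + 2) - C 1) ^ ((j + 1 : Fin (m + 2)) : ℕ) := by
      simp only [hMdef, Matrix.of_apply, sub_smul, ite_smul, one_smul, zero_smul, hb,
        mul_ite, mul_one, mul_zero]
      rw [Finset.sum_sub_distrib, Finset.sum_ite_eq' Finset.univ j
        (fun i => AdjoinRoot.root ((X : A[X]) ^ (m + 2) - C 1) ^ (i : ℕ)),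
        if_pos (Finset.mem_univ j)]
      congr 1
      rw [show (∑ i : Fin (m + 2), if i = j + 1 then
            c • AdjoinRoot.root ((X : A[X]) ^ (m + 2) - C 1) ^ (i : ℕ) else 0) =
        _ from Finset.sum_ite_eq' Finset.univ (j + 1)
          (fun i => c • AdjoinRoot.root ((X : A[X]) ^ (m + 2) - C 1) ^ (i : ℕ)),
        if_pos (Finset.mem_univ _)]
    rw [hsum, ← hrpow, Algebra.smul_def, hc]
    simp only [map_sub, map_one]
    ring
  rw [hdet1, hlin, LinearMap.det_toLin, hMdef, det_key m c, hc]

end Assemble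


/-- over `R = ℤ[x]`, the ring `S = R[y]/(1 − (1 − y)^p)` is free
with basis `1, y, …, y^{p−1}`, and the determinant of multiplication by
`x + y − x·y` on `S` equals `1 − (1 − x)^p`. -/
theorem norm_of_multiplicative_coordinate (p : ℕ) (hp : p.Prime) :
    (∃ b : Module.Basis (Fin p) (Polynomial ℤ)
        (AdjoinRoot (1 - (1 - X : Polynomial (Polynomial ℤ)) ^ p)),
      ∀ i : Fin p,
        b i = AdjoinRoot.root (1 - (1 - X : Polynomial (Polynomial ℤ)) ^ p) ^ (i : ℕ)) ∧
    LinearMap.det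
      (LinearMap.mulLeft (Polynomial ℤ)
        (algebraMap (Polynomial ℤ)
            (AdjoinRoot (1 - (1 - X : Polynomial (Polynomial ℤ)) ^ p)) X +
          AdjoinRoot.root (1 - (1 - X : Polynomial (Polynomial ℤ)) ^ p) -
          algebraMap (Polynomial ℤ)
              (AdjoinRoot (1 - (1 - X : Polynomial (Polynomial ℤ)) ^ p)) X *
            AdjoinRoot.root (1 - (1 - X : Polynomial (Polynomial ℤ)) ^ p))) =
      1 - (1 - X : Polynomial ℤ) ^ p := by
  exact ⟨exists_basis p hp.pos, det_part p hp.two_le X⟩
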